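/- Suppose m merges are performed on n nodes with no cuts, where the i-th merge has shorter merge path containing p_i nodes. Then Σᵢ (p_i − 1)² ≤ n(n−1)/2, and consequently Σᵢ p_i ≤ m + n√m; if additionally all merges are of leaves (so m < n), Σᵢ p_i = O(n^{3/2}). -/

import Mathlib

/-- `prel p a b` : `b` is the parent of `a`. -/
def prel (p : ℤ → Option ℤ) (a b : ℤ) : Prop := p a = some b

/-- `anc p a b` : `b` is an ancestor of `a` (including `a` itself). -/
def anc (p : ℤ → Option ℤ) (a b : ℤ) : Prop := Relation.ReflTransGen (prel p) a b

/-- `MergeStep p q v w` : the forest `q` is obtained from the forest `p` by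
`merge(v,w)`: the nodes of the root paths of `v` and `w` are rearranged into a
single chain in increasing (heap) order, all other parents unchanged. -/
def MergeStep (p q : ℤ → Option ℤ) (v w : ℤ) : Prop :=
  (∀ x : ℤ, ¬ (anc p v x ∨ anc p w x) → q x = p x) ∧
  (∀ x : ℤ, (anc p v x ∨ anc p w x) →
    (∀ b : ℤ, q x = some b ↔ ((anc p v b ∨ anc p w b) ∧ b < x ∧
        ∀ z : ℤ, (anc p v z ∨ anc p w z) → z < x → z ≤ b)) ∧
    (q x = none ↔ ∀ z : ℤ, (anc p v z ∨ anc p w z) → ¬ z < x))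

/-- `IsLeafNode p v` : `v` has no children. -/
def IsLeafNode (p : ℤ → Option ℤ) (v : ℤ) : Prop := ∀ x : ℤ, p x ≠ some v

/-- `mergePathV p v w` : the node set of the merge path of `v` in `merge(v,w)`,
i.e. the nodes of the path from `v` up to the nearest common ancestor of `v` and
`w` (in a heap-ordered forest, a common ancestor is a common upper bound, and the
nca is the least of them), or the whole root path of `v` if there is no common
ancestor. -/
def mergePathV (p : ℤ → Option ℤ) (v w : ℤ) : Set ℤ :=
  {z | anc p v z ∧ ∀ y : ℤ, anc p v y → anc p w y → z ≤ y}

section Aux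
variable {p q : ℤ → Option ℤ} {V : Finset ℤ}

lemma anc_le (hheap : ∀ x b, p x = some b → b < x) {a b : ℤ} (h : anc p a b) : b ≤ a := by
  induction h with
  | refl => exact le_refl _
  | tail h e ih => exact le_trans (le_of_lt (hheap _ _ e)) ih

lemma anc_mem (hdom : ∀ x b, p x = some b → x ∈ V ∧ b ∈ V) {a b : ℤ}
    (ha : a ∈ V) (h : anc p a b) : b ∈ V := by
  induction h with
  | refl => exact ha
  | tail h e ih => exact (hdom _ _ e).2

lemma anc_total {a b c : ℤ} (h1 : anc p a b) (h2 : anc p a c) :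
    anc p b c ∨ anc p c b := by
  refine Relation.ReflTransGen.total_of_right_unique ?_ h1 h2
  intro x y z hy hz
  rw [prel] at hy hz; rw [hy] at hz; exact Option.some.inj hz

end Aux


section Aux2
variable {p q : ℤ → Option ℤ} {v w : ℤ}

lemma chain_aux (hms : MergeStep p q v w) (hfin : {x | anc p v x ∨ anc p w x}.Finite) :
    ∀ n x, (anc p v x ∨ anc p w x) → (hfin.toFinset.filter (· < x)).card ≤ n →
      ∀ b, (anc p v b ∨ anc p w b) → b ≤ x → anc q x b := by
  intro n
  induction n with
  | zero =>
    intro x hx hcard b hb hbx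
    rcases eq_or_lt_of_le hbx with rfl | hlt
    · exact Relation.ReflTransGen.refl
    · exfalso
      have hmem : b ∈ hfin.toFinset.filter (· < x) := by
        simp only [Finset.mem_filter, Set.Finite.mem_toFinset, Set.mem_setOf_eq]
        exact ⟨hb, hlt⟩
      have := Finset.card_pos.mpr ⟨b, hmem⟩; omega
  | succ n ih =>
    intro x hx hcard b hb hbx
    rcases eq_or_lt_of_le hbx with rfl | hlt
    · exact Relation.ReflTransGen.refl
    · have hbm : b ∈ hfin.toFinset.filter (· < x) := by
        simp only [Finset.mem_filter, Set.Finite.mem_toFinset, Set.mem_setOf_eq]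
        exact ⟨hb, hlt⟩
      have hne : (hfin.toFinset.filter (· < x)).Nonempty := ⟨b, hbm⟩
      set b' := (hfin.toFinset.filter (· < x)).max' hne with hb'def
      have hb'mem := (hfin.toFinset.filter (· < x)).max'_mem hne
      simp only [Finset.mem_filter, Set.Finite.mem_toFinset, Set.mem_setOf_eq] at hb'mem
      have hq : q x = some b' := by
        rw [((hms.2 x hx).1 b')]
        refine ⟨hb'mem.1, hb'mem.2, fun z hz hzx => Finset.le_max' _ z ?_⟩
        simp only [Finset.mem_filter, Set.Finite.mem_toFinset, Set.mem_setOf_eq]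
        exact ⟨hz, hzx⟩
      have hble : b ≤ b' := Finset.le_max' _ b hbm
      have hsub : (hfin.toFinset.filter (· < b')).card ≤ n := by
        have hsubset : (hfin.toFinset.filter (· < b')) ⊆ (hfin.toFinset.filter (· < x)) := by
          intro z hz
          simp only [Finset.mem_filter] at *
          exact ⟨hz.1, lt_trans hz.2 hb'mem.2⟩
        have hss : (hfin.toFinset.filter (· < b')) ⊂ (hfin.toFinset.filter (· < x)) := by
          refine (Finset.ssubset_iff_of_subset hsubset).mpr ⟨b', ?_, by simp⟩
          simp only [Finset.mem_filter, Set.Finite.mem_toFinset, Set.mem_setOf_eq]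
          exact ⟨hb'mem.1, hb'mem.2⟩
        have := Finset.card_lt_card hss; omega
      exact Relation.ReflTransGen.head hq (ih b' hb'mem.1 hsub b hb hble)

lemma chain_anc (hms : MergeStep p q v w) (hfin : {x | anc p v x ∨ anc p w x}.Finite)
    {x b : ℤ} (hx : anc p v x ∨ anc p w x) (hb : anc p v b ∨ anc p w b) (hbx : b ≤ x) :
    anc q x b :=
  chain_aux hms hfin _ x hx le_rfl b hb hbx

lemma anc_mono (hms : MergeStep p q v w) (hheap : ∀ x b, p x = some b → b < x)
    (hfin : {x | anc p v x ∨ anc p w x}.Finite) {a b : ℤ} (h : anc p a b) : anc q a b := by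
  induction h with
  | refl => exact Relation.ReflTransGen.refl
  | @tail c d h e ih =>
    by_cases hc : anc p v c ∨ anc p w c
    · have hd : anc p v d ∨ anc p w d := hc.imp (fun h' => h'.tail e) (fun h' => h'.tail e)
      exact ih.trans (chain_anc hms hfin hc hd (le_of_lt (hheap _ _ e)))
    · have : q c = some d := by rw [hms.1 c hc]; exact e
      exact ih.tail this

end Aux2


open Classical in
noncomputable def UP (V : Finset ℤ) (p : ℤ → Option ℤ) : Finset (ℤ × ℤ) :=
  (V ×ˢ V).filter (fun z => z.1 < z.2 ∧ ¬ (anc p z.1 z.2 ∨ anc p z.2 z.1))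

open Classical in
lemma mem_UP {V : Finset ℤ} {p : ℤ → Option ℤ} {z : ℤ × ℤ} :
    z ∈ UP V p ↔ z.1 ∈ V ∧ z.2 ∈ V ∧ z.1 < z.2 ∧ ¬ (anc p z.1 z.2 ∨ anc p z.2 z.1) := by
  simp [UP, Finset.mem_filter, Finset.mem_product, and_assoc]

section Step
variable {V : Finset ℤ} {p q : ℤ → Option ℤ} {v w : ℤ}

lemma UP_mono (hms : MergeStep p q v w)
    (hdomp : ∀ x b, p x = some b → x ∈ V ∧ b ∈ V)
    (hheapp : ∀ x b, p x = some b → b < x)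
    (hv : v ∈ V) (hw : w ∈ V) : UP V q ⊆ UP V p := by
  have hfin : {x | anc p v x ∨ anc p w x}.Finite := by
    refine Set.Finite.subset V.finite_toSet (fun x hx => ?_)
    rcases hx with h | h
    · exact anc_mem hdomp hv h
    · exact anc_mem hdomp hw h
  intro z hz
  rw [mem_UP] at hz ⊢
  refine ⟨hz.1, hz.2.1, hz.2.2.1, fun hrel => hz.2.2.2 ?_⟩
  exact hrel.imp (anc_mono hms hheapp hfin) (anc_mono hms hheapp hfin)

lemma step_card (hms : MergeStep p q v w)
    (hdomp : ∀ x b, p x = some b → x ∈ V ∧ b ∈ V)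
    (hheapp : ∀ x b, p x = some b → b < x)
    (hv : v ∈ V) (hw : w ∈ V) {k : ℕ}
    (hk : k = min (mergePathV p v w).ncard (mergePathV p w v).ncard) :
    (UP V q).card + (k - 1) ^ 2 ≤ (UP V p).card := by
  classical
  have hfin : {x | anc p v x ∨ anc p w x}.Finite := by
    refine Set.Finite.subset V.finite_toSet (fun x hx => ?_)
    rcases hx with h | h
    · exact anc_mem hdomp hv h
    · exact anc_mem hdomp hw h
  have hUsub : UP V q ⊆ UP V p := UP_mono hms hdomp hheapp hv hw
  by_cases hc : ∃ y, anc p v y ∧ anc p w y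
  · -- common ancestor: shorter merge path is a singleton (or empty), k ≤ 1
    obtain ⟨y0, hy01, hy02⟩ := hc
    have hsub : (mergePathV p v w).Subsingleton := by
      have hca : ∀ z ∈ mergePathV p v w, anc p v z ∧ anc p w z := by
        rintro z ⟨hz1, hz2⟩
        rcases anc_total hz1 hy01 with h | h
        · have : y0 ≤ z := anc_le hheapp h
          have : z = y0 := le_antisymm (hz2 y0 hy01 hy02) this
          exact this ▸ ⟨hy01, hy02⟩
        · exact ⟨hz1, hy02.trans h⟩
      rintro z1 hz1 z2 hz2
      exact le_antisymm (hz1.2 z2 (hca z2 hz2).1 (hca z2 hz2).2)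
        (hz2.2 z1 (hca z1 hz1).1 (hca z1 hz1).2)
    have hk1 : k ≤ 1 := by
      rw [hk]
      exact le_trans (min_le_left _ _) ((Set.ncard_le_one hsub.finite).mpr hsub)
    have : (k - 1) ^ 2 = 0 := by interval_cases k <;> simp
    rw [this, Nat.add_zero]
    exact Finset.card_le_card hUsub
  · -- no common ancestor
    push_neg at hc
    have finv : {z | anc p v z}.Finite :=
      Set.Finite.subset V.finite_toSet (fun x hx => anc_mem hdomp hv hx)
    have finw : {z | anc p w z}.Finite :=
      Set.Finite.subset V.finite_toSet (fun x hx => anc_mem hdomp hw hx)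
    set Tv := finv.toFinset with hTv
    set Tw := finw.toFinset with hTw
    have hmv : ∀ z, z ∈ Tv ↔ anc p v z := by
      intro z; rw [hTv, Set.Finite.mem_toFinset]; rfl
    have hmw : ∀ z, z ∈ Tw ↔ anc p w z := by
      intro z; rw [hTw, Set.Finite.mem_toFinset]; rfl
    have hdisj : ∀ a, a ∈ Tv → a ∉ Tw := by
      intro a ha hb
      exact hc a ((hmv a).mp ha) ((hmw a).mp hb)
    have hkv : k ≤ Tv.card := by
      rw [hk]
      refine le_trans (min_le_left _ _) ?_
      have : mergePathV p v w = {z | anc p v z} := by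
        ext z
        exact ⟨fun h => h.1, fun h => ⟨h, fun y h1 h2 => absurd (hc y h1) (by simp [h2])⟩⟩
      rw [this, Set.ncard_eq_toFinset_card _ finv]
    have hkw : k ≤ Tw.card := by
      rw [hk]
      refine le_trans (min_le_right _ _) ?_
      have : mergePathV p w v = {z | anc p w z} := by
        ext z
        exact ⟨fun h => h.1, fun h => ⟨h, fun y h1 h2 => absurd (hc y h2) (by simp [h1])⟩⟩
      rw [this, Set.ncard_eq_toFinset_card _ finw]
    set N : Finset (ℤ × ℤ) := (Tv ×ˢ Tw).image (fun z => (min z.1 z.2, max z.1 z.2)) with hN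
    have hinj : Set.InjOn (fun z : ℤ × ℤ => (min z.1 z.2, max z.1 z.2)) ↑(Tv ×ˢ Tw) := by
      rintro ⟨a1, b1⟩ h1 ⟨a2, b2⟩ h2 heq
      simp only [Finset.coe_product, Set.mem_prod, Finset.mem_coe] at h1 h2
      have e1 : min a1 b1 = min a2 b2 := congrArg Prod.fst heq
      have e2 : max a1 b1 = max a2 b2 := congrArg Prod.snd heq
      have n1 : a1 ≠ b1 := fun h => hdisj a1 h1.1 (h ▸ h1.2)
      have n2 : a2 ≠ b2 := fun h => hdisj a2 h2.1 (h ▸ h2.2)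
      have n3 : a1 ≠ b2 := fun h => hdisj a1 h1.1 (h ▸ h2.2)
      have n4 : a2 ≠ b1 := fun h => hdisj a2 h2.1 (h ▸ h1.2)
      have : a1 = a2 ∧ b1 = b2 := by omega
      simp [this.1, this.2]
    have hNcard : N.card = Tv.card * Tw.card := by
      rw [hN, Finset.card_image_of_injOn hinj, Finset.card_product]
    have hNsubU : N ⊆ UP V p := by
      intro z hz
      rw [hN, Finset.mem_image] at hz
      obtain ⟨⟨a, b⟩, hab, rfl⟩ := hz
      rw [Finset.mem_product] at hab
      have hav : anc p v a := (hmv a).mp hab.1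
      have hbw : anc p w b := (hmw b).mp hab.2
      have hne : a ≠ b := fun h => hdisj a hab.1 (h ▸ hab.2)
      have hab' : ¬ anc p a b := fun h => hc b (hav.trans h) hbw
      have hba' : ¬ anc p b a := fun h => hc a hav (hbw.trans h)
      rw [mem_UP]
      refine ⟨?_, ?_, by simp; omega, ?_⟩
      · simp only [min_def]
        split <;> [exact anc_mem hdomp hv hav; exact anc_mem hdomp hw hbw]
      · simp only [max_def]
        split <;> [exact anc_mem hdomp hw hbw; exact anc_mem hdomp hv hav]
      · rintro (h | h) <;> simp only [min_def, max_def] at h <;> split_ifs at h <;>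
          first
            | exact hab' h | exact hba' h
    have hNdisj : ∀ z ∈ N, z ∉ UP V q := by
      intro z hz hzU
      rw [hN, Finset.mem_image] at hz
      obtain ⟨⟨a, b⟩, hab, rfl⟩ := hz
      rw [Finset.mem_product] at hab
      have hav : anc p v a ∨ anc p w a := Or.inl ((hmv a).mp hab.1)
      have hbw : anc p v b ∨ anc p w b := Or.inr ((hmw b).mp hab.2)
      have hrel : anc q (max a b) (min a b) := by
        rcases le_total a b with h | h
        · rw [max_eq_right h, min_eq_left h]
          exact chain_anc hms hfin hbw hav h
        · rw [max_eq_left h, min_eq_right h]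
          exact chain_anc hms hfin hav hbw h
      rw [mem_UP] at hzU
      exact hzU.2.2.2 (Or.inr hrel)
    have hdisjUN : Disjoint N (UP V q) :=
      Finset.disjoint_left.mpr hNdisj
    have hcup : (UP V q).card + N.card ≤ (UP V p).card := by
      have : N ∪ UP V q ⊆ UP V p := Finset.union_subset hNsubU hUsub
      have hle := Finset.card_le_card this
      rw [Finset.card_union_of_disjoint hdisjUN] at hle
      omega
    have : (k - 1) ^ 2 ≤ Tv.card * Tw.card := by
      calc (k - 1) ^ 2 = (k - 1) * (k - 1) := sq (k-1) ▸ (by ring)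
        _ ≤ Tv.card * Tw.card := Nat.mul_le_mul (le_trans (Nat.sub_le _ _) hkv)
            (le_trans (Nat.sub_le _ _) hkw)
    omega

end Step

/-- If `m` merges are performed on `n` nodes with no cuts, with the `i`-th merge
having shorter merge path of `pᵢ` nodes, then `∑ᵢ (pᵢ − 1)² ≤ n(n−1)/2`, hence
`∑ᵢ pᵢ ≤ m + n·√m`; and if all merges are of leaves (so `m < n`), then
`∑ᵢ pᵢ ≤ n + n·√n = O(n^{3/2})`. -/
theorem shorter_merge_paths_bound (V : Finset ℤ) (m : ℕ) (F : ℕ → ℤ → Option ℤ)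
    (v w : ℕ → ℤ) (p : ℕ → ℕ)
    (h0 : ∀ x : ℤ, F 0 x = none)
    (hdom : ∀ i x b, F i x = some b → x ∈ V ∧ b ∈ V)
    (hheap : ∀ i x b, F i x = some b → b < x)
    (hstep : ∀ i < m, v i ∈ V ∧ w i ∈ V ∧ MergeStep (F i) (F (i + 1)) (v i) (w i))
    (hp : ∀ i < m, p i = min (mergePathV (F i) (v i) (w i)).ncard
                           (mergePathV (F i) (w i) (v i)).ncard) :
    (∑ i ∈ Finset.range m, (p i - 1) ^ 2) ≤ V.card * (V.card - 1) / 2 ∧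
    ((∑ i ∈ Finset.range m, p i : ℕ) : ℝ) ≤ (m : ℝ) + (V.card : ℝ) * Real.sqrt m ∧
    ((∀ i < m, IsLeafNode (F i) (v i) ∧ IsLeafNode (F i) (w i)) → m < V.card →
      ((∑ i ∈ Finset.range m, p i : ℕ) : ℝ) ≤
        (V.card : ℝ) + (V.card : ℝ) * Real.sqrt V.card) := by
  classical
  -- telescoping the potential
  have key : ∀ j, j ≤ m →
      (∑ i ∈ Finset.range j, (p i - 1) ^ 2) + (UP V (F j)).card ≤ (UP V (F 0)).card := by
    intro j
    induction j with
    | zero => intro _; simp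
    | succ j ih =>
      intro hj
      have hjm : j < m := by omega
      obtain ⟨hv, hw, hms⟩ := hstep j hjm
      have hstepcard := step_card hms (hdom j) (hheap j) hv hw (hp j hjm)
      have := ih (by omega)
      rw [Finset.sum_range_succ]
      omega
  -- the initial potential is at most n(n-1)/2
  have h0card : (UP V (F 0)).card ≤ V.card * (V.card - 1) / 2 := by
    have hinj : (UP V (F 0)).card ≤ (V.powersetCard 2).card := by
      refine Finset.card_le_card_of_injOn (fun z => ({z.1, z.2} : Finset ℤ)) ?_ ?_
      · intro z hz
        rw [Finset.mem_coe, mem_UP] at hz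
        rw [Finset.mem_coe, Finset.mem_powersetCard]
        constructor
        · intro x hx
          rcases Finset.mem_insert.mp hx with rfl | hx
          · exact hz.1
          · rw [Finset.mem_singleton] at hx; exact hx ▸ hz.2.1
        · exact Finset.card_pair (ne_of_lt hz.2.2.1)
      · rintro ⟨a, b⟩ hz ⟨c, d⟩ hz' heq
        replace heq : ({a, b} : Finset ℤ) = ({c, d} : Finset ℤ) := heq
        simp only [Finset.mem_coe, mem_UP] at hz hz'
        have h1 : a ∈ ({c, d} : Finset ℤ) := heq ▸ (by simp)
        have h2 : b ∈ ({c, d} : Finset ℤ) := heq ▸ (by simp)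
        have h3 : c ∈ ({a, b} : Finset ℤ) := heq ▸ (by simp)
        simp only [Finset.mem_insert, Finset.mem_singleton] at h1 h2 h3
        have hab := hz.2.2.1
        have hcd := hz'.2.2.1
        have : a = c ∧ b = d := by omega
        simp [this.1, this.2]
    rwa [Finset.card_powersetCard, Nat.choose_two_right] at hinj
  have part1 : (∑ i ∈ Finset.range m, (p i - 1) ^ 2) ≤ V.card * (V.card - 1) / 2 := by
    have := key m le_rfl
    omega
  refine ⟨part1, ?_⟩
  set n := V.card with hn
  have hple : (∑ i ∈ Finset.range m, p i) ≤ m + ∑ i ∈ Finset.range m, (p i - 1) := by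
    calc (∑ i ∈ Finset.range m, p i) ≤ ∑ i ∈ Finset.range m, (1 + (p i - 1)) :=
          Finset.sum_le_sum (fun i _ => by omega)
      _ = m + ∑ i ∈ Finset.range m, (p i - 1) := by
          rw [Finset.sum_add_distrib, Finset.sum_const, Finset.card_range, smul_eq_mul, mul_one]
  set g : ℕ → ℝ := fun i => ((p i - 1 : ℕ) : ℝ) with hg
  have hgnonneg : 0 ≤ ∑ i ∈ Finset.range m, g i :=
    Finset.sum_nonneg (fun i _ => Nat.cast_nonneg _)
  have hcs : (∑ i ∈ Finset.range m, g i) ^ 2 ≤ (m : ℝ) * ∑ i ∈ Finset.range m, g i ^ 2 := by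
    have := Finset.sum_mul_sq_le_sq_mul_sq (Finset.range m) (fun _ => (1 : ℝ)) g
    simpa using this
  have hg2 : (∑ i ∈ Finset.range m, g i ^ 2) ≤ (n : ℝ) ^ 2 := by
    have hcast : (∑ i ∈ Finset.range m, g i ^ 2) =
        ((∑ i ∈ Finset.range m, (p i - 1) ^ 2 : ℕ) : ℝ) := by
      push_cast [hg]; rfl
    have hnat : (∑ i ∈ Finset.range m, (p i - 1) ^ 2) ≤ n * n := by
      calc (∑ i ∈ Finset.range m, (p i - 1) ^ 2) ≤ n * (n - 1) / 2 := part1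
        _ ≤ n * (n - 1) := Nat.div_le_self _ _
        _ ≤ n * n := Nat.mul_le_mul_left _ (Nat.sub_le _ _)
    rw [hcast, sq]
    exact_mod_cast hnat
  have hA : (∑ i ∈ Finset.range m, g i) ≤ (n : ℝ) * Real.sqrt m := by
    have h1 : (∑ i ∈ Finset.range m, g i) = Real.sqrt ((∑ i ∈ Finset.range m, g i) ^ 2) :=
      (Real.sqrt_sq hgnonneg).symm
    rw [h1]
    calc Real.sqrt ((∑ i ∈ Finset.range m, g i) ^ 2)
        ≤ Real.sqrt ((m : ℝ) * (n : ℝ) ^ 2) := by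
          refine Real.sqrt_le_sqrt ?_
          exact le_trans hcs (by nlinarith [hg2, Nat.cast_nonneg (α := ℝ) m])
      _ = (n : ℝ) * Real.sqrt m := by
          rw [Real.sqrt_mul (Nat.cast_nonneg m), Real.sqrt_sq (Nat.cast_nonneg n)]
          ring
  have part2 : ((∑ i ∈ Finset.range m, p i : ℕ) : ℝ) ≤ (m : ℝ) + (n : ℝ) * Real.sqrt m := by
    have h1 : ((∑ i ∈ Finset.range m, p i : ℕ) : ℝ) ≤
        (m : ℝ) + ∑ i ∈ Finset.range m, g i := by
      have : ((∑ i ∈ Finset.range m, p i : ℕ) : ℝ) ≤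
          ((m + ∑ i ∈ Finset.range m, (p i - 1) : ℕ) : ℝ) := by exact_mod_cast hple
      refine le_trans this (le_of_eq ?_)
      push_cast [hg]; ring
    exact le_trans h1 (by linarith)
  refine ⟨part2, fun _ hmn => ?_⟩
  refine le_trans part2 (add_le_add ?_ ?_)
  · exact_mod_cast hmn.le
  · exact mul_le_mul_of_nonneg_left (Real.sqrt_le_sqrt (by exact_mod_cast hmn.le))
      (Nat.cast_nonneg n)
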